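/- Let k be a field of characteristic zero, J an ideal of k[x_1,…,x_n] contained in (x_1,…,x_n) such that A = k[x_1,…,x_n]/J is Artinian with socle degree η, and suppose the bilinear form (a,b) ↦ ρ(ab) on A is non-degenerate, where ρ : A → k is a linear form whose kernel is complementary to Soc(A). Define R(x_1,…,x_n) = Σ_{j=0}^{η} (1/j!) ρ((x_1 e_1 + ⋯ + x_n e_n)^j), where e_i is the class of x_i in A. Then Ann(R) = J, i.e. a polynomial f ∈ k[x_1,…,x_n] satisfies f(∂/∂x_1,…,∂/∂x_n)(R) = 0 if and only if f ∈ J. -/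

import Mathlib

open MvPolynomial

set_option synthInstance.maxHeartbeats 400000
set_option maxHeartbeats 1000000

/-- The iterated partial derivative operator `∂^d = ∏ᵢ (∂/∂xᵢ)^{dᵢ}` attached to a
multi-index `d`. -/
noncomputable def diffMonomial {n : ℕ} {k : Type*} [CommSemiring k] (d : Fin n →₀ ℕ) :
    Module.End k (MvPolynomial (Fin n) k) :=
  (List.ofFn fun i : Fin n =>
    ((pderiv i).toLinearMap : Module.End k (MvPolynomial (Fin n) k)) ^ (d i)).prod

/-- The action of a polynomial `f` on a polynomial `g` by substituting partial
differentiation operators for the variables: `f(∂/∂x_1, …, ∂/∂x_n)(g)`. -/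
noncomputable def diffOp {n : ℕ} {k : Type*} [CommSemiring k]
    (f g : MvPolynomial (Fin n) k) : MvPolynomial (Fin n) k :=
  ∑ d ∈ f.support, f.coeff d • diffMonomial d g

/-- Apply a linear functional `ρ : A → k` coefficientwise to a polynomial with
coefficients in `A`, producing a polynomial with coefficients in `k`. -/
noncomputable def coeffMap {n : ℕ} {k A : Type*} [CommSemiring k] [CommSemiring A]
    (ρ : A → k) (p : MvPolynomial (Fin n) A) : MvPolynomial (Fin n) k :=
  ∑ d ∈ p.support, monomial d (ρ (p.coeff d))

/-- The socle `Soc(A) = { x ∈ M : x M = 0 }` of an algebra `A` with respect to an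
ideal `M` (to be taken as the maximal ideal), as a `k`-submodule of `A`. -/
noncomputable def socle (k : Type*) {A : Type*} [Field k] [CommRing A] [Algebra k A]
    (M : Ideal A) : Submodule k A :=
  (Submodule.restrictScalars k M) ⊓ ⨅ y ∈ M, LinearMap.ker (LinearMap.mulLeft k y)

set_option linter.unusedSectionVars false

section Aux
variable {k : Type*} [Field k] {n : ℕ} {A : Type*} [CommRing A] [Algebra k A]

lemma coeff_coeffMap (ρ : A →ₗ[k] k) (p : MvPolynomial (Fin n) A) (m : Fin n →₀ ℕ) :
    coeff m (coeffMap (fun a => ρ a) p) = ρ (coeff m p) := by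
  unfold coeffMap
  rw [coeff_sum]
  by_cases h : m ∈ p.support
  · rw [Finset.sum_eq_single m]
    · simp [coeff_monomial]
    · intro d _ hd
      simp [coeff_monomial, hd]
    · intro hm; exact absurd h hm
  · rw [Finset.sum_eq_zero, notMem_support_iff.mp h, map_zero]
    intro d hd
    have hdm : d ≠ m := fun e => h (e ▸ hd)
    simp [coeff_monomial, hdm]

lemma coeff_pderiv {R : Type*} [CommSemiring R] (i : Fin n) (p : MvPolynomial (Fin n) R)
    (m : Fin n →₀ ℕ) :
    coeff m (pderiv i p) = (m i + 1) • coeff (m + Finsupp.single i 1) p := by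
  induction p using MvPolynomial.induction_on' with
  | add p q hp hq => simp [hp, hq, smul_add]
  | monomial s a =>
    rw [pderiv_monomial, coeff_monomial, coeff_monomial]
    rcases eq_or_ne s (m + Finsupp.single i 1) with h2 | h2
    · subst h2
      rw [add_tsub_cancel_right, if_pos rfl, if_pos rfl]
      simp [Finsupp.add_apply, Finsupp.single_eq_same, nsmul_eq_mul, mul_comm]
    · rw [if_neg h2, smul_zero]
      by_cases hsi : s i = 0
      · simp [hsi]
      · rw [if_neg]
        intro h1
        apply h2
        ext j
        have hj := DFunLike.congr_fun h1 j
        rw [Finsupp.tsub_apply] at hj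
        rcases eq_or_ne j i with rfl | hji
        · simp only [Finsupp.single_eq_same] at hj
          simp only [Finsupp.add_apply, Finsupp.single_eq_same]
          omega
        · rw [Finsupp.single_eq_of_ne hji, tsub_zero] at hj
          simp [Finsupp.add_apply, Finsupp.single_eq_of_ne hji, hj]

lemma coeffMap_smul (ρ : A →ₗ[k] k) (c : k) (p : MvPolynomial (Fin n) A) :
    coeffMap (fun a => ρ a) (c • p) = c • coeffMap (fun a => ρ a) p := by
  ext m
  rw [coeff_coeffMap, coeff_smul, coeff_smul, coeff_coeffMap, map_smul]

lemma coeffMap_sum {ι : Type*} (ρ : A →ₗ[k] k) (s : Finset ι) (g : ι → MvPolynomial (Fin n) A) :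
    coeffMap (fun a => ρ a) (∑ x ∈ s, g x) = ∑ x ∈ s, coeffMap (fun a => ρ a) (g x) := by
  ext m
  rw [coeff_coeffMap, coeff_sum, coeff_sum, map_sum]
  exact Finset.sum_congr rfl fun x _ => (coeff_coeffMap ρ (g x) m).symm

lemma coeffMap_zero (ρ : A →ₗ[k] k) :
    coeffMap (fun a => ρ a) (0 : MvPolynomial (Fin n) A) = 0 := by
  ext m
  rw [coeff_coeffMap]
  simp

lemma coeffMap_pderiv (ρ : A →ₗ[k] k) (i : Fin n) (p : MvPolynomial (Fin n) A) :
    pderiv i (coeffMap (fun a => ρ a) p) = coeffMap (fun a => ρ a) (pderiv i p) := by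
  ext m
  rw [_root_.coeff_pderiv, coeff_coeffMap, coeff_coeffMap, _root_.coeff_pderiv, map_nsmul]

lemma coeffMap_endpow (ρ : A →ₗ[k] k) (i : Fin n) (m : ℕ) (p : MvPolynomial (Fin n) A) :
    (((pderiv i).toLinearMap : Module.End k (MvPolynomial (Fin n) k)) ^ m)
        (coeffMap (fun a => ρ a) p)
      = coeffMap (fun a => ρ a)
        ((((pderiv i).toLinearMap : Module.End A (MvPolynomial (Fin n) A)) ^ m) p) := by
  induction m generalizing p with
  | zero => simp
  | succ m ih =>
    rw [pow_succ, pow_succ, Module.End.mul_apply, Module.End.mul_apply]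
    have h1 : ((pderiv i).toLinearMap : Module.End k (MvPolynomial (Fin n) k))
          (coeffMap (fun a => ρ a) p)
        = coeffMap (fun a => ρ a)
          (((pderiv i).toLinearMap : Module.End A (MvPolynomial (Fin n) A)) p) :=
      coeffMap_pderiv ρ i p
    rw [h1]
    exact ih _

lemma coeffMap_listprod (ρ : A →ₗ[k] k) (l : List (Fin n × ℕ)) (p : MvPolynomial (Fin n) A) :
    ((l.map fun q => ((pderiv q.1).toLinearMap : Module.End k (MvPolynomial (Fin n) k)) ^ q.2).prod)
        (coeffMap (fun a => ρ a) p)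
      = coeffMap (fun a => ρ a)
        (((l.map fun q =>
            ((pderiv q.1).toLinearMap : Module.End A (MvPolynomial (Fin n) A)) ^ q.2).prod) p) := by
  induction l with
  | nil => simp
  | cons q l ih =>
    simp only [List.map_cons, List.prod_cons, Module.End.mul_apply]
    rw [ih, coeffMap_endpow]

lemma coeffMap_diffMonomial (ρ : A →ₗ[k] k) (d : Fin n →₀ ℕ) (p : MvPolynomial (Fin n) A) :
    diffMonomial d (coeffMap (fun a => ρ a) p) = coeffMap (fun a => ρ a) (diffMonomial d p) := by
  have h := coeffMap_listprod ρ (List.ofFn fun i => (i, d i)) p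
  rw [List.map_ofFn, List.map_ofFn] at h
  exact h

end Aux

section Aux2
variable {k : Type*} [Field k] [CharZero k] {n : ℕ} {A : Type*} [CommRing A] [Algebra k A]
variable (e : Fin n → A) (M : Ideal A) (η : ℕ)

lemma coeff_L_mem (he : ∀ i, e i ∈ M) (d : Fin n →₀ ℕ) :
    coeff d (∑ i, C (e i) * X i) ∈ M := by
  rw [coeff_sum]
  exact Submodule.sum_mem M fun i _ => by
    rw [coeff_C_mul]; exact M.mul_mem_right _ (he i)

lemma coeff_L_pow_mem (he : ∀ i, e i ∈ M) (j : ℕ) (d : Fin n →₀ ℕ) :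
    coeff d ((∑ i, C (e i) * X i) ^ j) ∈ M ^ j := by
  induction j generalizing d with
  | zero =>
    rw [pow_zero, pow_zero, Ideal.one_eq_top]
    exact Submodule.mem_top
  | succ j ih =>
    rw [pow_succ, pow_succ, coeff_mul]
    refine Submodule.sum_mem _ fun x _ => ?_
    exact Ideal.mul_mem_mul (ih x.1) (coeff_L_mem e M he x.2)

lemma C_e_mul_L_eta (he : ∀ i, e i ∈ M) (hM : M ^ (η + 1) = ⊥) (i : Fin n) :
    C (e i) * (∑ i, C (e i) * X i) ^ η = 0 := by
  ext d
  rw [coeff_C_mul, coeff_zero]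
  have h1 : e i * coeff d ((∑ i, C (e i) * X i) ^ η) ∈ M ^ (η + 1) := by
    rw [pow_succ, mul_comm (M ^ η) M]
    exact Ideal.mul_mem_mul (he i) (coeff_L_pow_mem e M he η d)
  rw [hM] at h1
  exact h1

lemma pderiv_L (i : Fin n) :
    pderiv i (∑ j, C (e j) * X j) = C (e i) := by
  rw [map_sum]
  rw [Finset.sum_eq_single i]
  · rw [pderiv_C_mul, pderiv_X_self, mul_one]
  · intro j _ hj
    rw [pderiv_C_mul, pderiv_X_of_ne hj, mul_zero]
  · intro h; exact absurd (Finset.mem_univ i) h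

lemma pderiv_smul_poly (i : Fin n) (c : k) (p : MvPolynomial (Fin n) A) :
    pderiv i (c • p) = c • pderiv i p := by
  rw [Algebra.smul_def, Algebra.smul_def]
  rw [show (algebraMap k (MvPolynomial (Fin n) A)) c = C (algebraMap k A c) from rfl]
  rw [pderiv_C_mul]

lemma pderiv_S (he : ∀ i, e i ∈ M) (hM : M ^ (η + 1) = ⊥) (i : Fin n) :
    pderiv i (∑ j ∈ Finset.range (η + 1), ((j.factorial : k))⁻¹ • (∑ i, C (e i) * X i) ^ j)
      = C (e i) * (∑ j ∈ Finset.range (η + 1),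
          ((j.factorial : k))⁻¹ • (∑ i, C (e i) * X i) ^ j) := by
  set L : MvPolynomial (Fin n) A := ∑ i, C (e i) * X i with hL
  rw [map_sum]
  calc
    ∑ j ∈ Finset.range (η + 1), pderiv i (((j.factorial : k))⁻¹ • L ^ j)
        = ∑ j ∈ Finset.range (η + 1),
            j • (((j.factorial : k))⁻¹ • (L ^ (j - 1) * C (e i))) := by
          refine Finset.sum_congr rfl fun j _ => ?_
          rw [pderiv_smul_poly, (pderiv i).leibniz_pow, pderiv_L, smul_eq_mul, smul_comm]
    _ = ∑ j ∈ Finset.range η, ((j.factorial : k))⁻¹ • (L ^ j * C (e i)) := by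
          rw [Finset.sum_range_succ']
          rw [zero_smul, add_zero]
          refine Finset.sum_congr rfl fun j _ => ?_
          rw [Nat.add_sub_cancel, ← Nat.cast_smul_eq_nsmul k, smul_smul]
          congr 1
          have h1 : ((j + 1).factorial : k) = ((j + 1 : ℕ) : k) * (j.factorial : k) := by
            rw [Nat.factorial_succ]; push_cast; ring
          have h2 : ((j + 1 : ℕ) : k) ≠ 0 := Nat.cast_ne_zero.mpr (Nat.succ_ne_zero j)
          have h3 : (j.factorial : k) ≠ 0 := Nat.cast_ne_zero.mpr j.factorial_ne_zero
          field_simp [h1]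
          rw [h1]
    _ = C (e i) * ∑ j ∈ Finset.range (η + 1), ((j.factorial : k))⁻¹ • L ^ j := by
          rw [Finset.mul_sum, Finset.sum_range_succ, mul_smul_comm,
            C_e_mul_L_eta e M η he hM i, smul_zero, add_zero]
          refine Finset.sum_congr rfl fun j _ => ?_
          rw [mul_smul_comm]
          congr 1
          ring
end Aux2

section Aux3
variable {k : Type*} [Field k] {n : ℕ} {A : Type*} [CommRing A] [Algebra k A]
variable (e : Fin n → A) (S : MvPolynomial (Fin n) A)

lemma pow_action (hS : ∀ i, pderiv i S = C (e i) * S) (i : Fin n) (m : ℕ) (a : A) :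
    (((pderiv i).toLinearMap : Module.End A (MvPolynomial (Fin n) A)) ^ m) (C a * S)
      = C (a * e i ^ m) * S := by
  induction m with
  | zero => simp
  | succ m ih =>
    rw [pow_succ', Module.End.mul_apply, ih]
    have h1 : ∀ b : A, ((pderiv i).toLinearMap : Module.End A (MvPolynomial (Fin n) A)) (C b * S)
        = C (b * e i) * S := by
      intro b
      show pderiv i (C b * S) = C (b * e i) * S
      rw [pderiv_C_mul, hS i, ← mul_assoc, ← C_mul]
    rw [h1]
    congr 2
    ring

lemma list_action (hS : ∀ i, pderiv i S = C (e i) * S) (l : List (Fin n × ℕ)) (a : A) :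
    ((l.map fun q =>
        ((pderiv q.1).toLinearMap : Module.End A (MvPolynomial (Fin n) A)) ^ q.2).prod) (C a * S)
      = C (a * (l.map fun q => e q.1 ^ q.2).prod) * S := by
  induction l generalizing a with
  | nil => simp
  | cons q l ih =>
    simp only [List.map_cons, List.prod_cons, Module.End.mul_apply]
    rw [ih, pow_action e S hS]
    congr 2
    ring

lemma diffMonomial_S (hS : ∀ i, pderiv i S = C (e i) * S) (d : Fin n →₀ ℕ) :
    diffMonomial d S = C (∏ i, e i ^ d i) * S := by
  have h := list_action e S hS (List.ofFn fun i => (i, d i)) 1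
  rw [List.map_ofFn, List.map_ofFn] at h
  rw [C_1, one_mul] at h
  rw [one_mul] at h
  unfold diffMonomial
  simp only [Function.comp_def] at h
  rw [h]
  congr 2
  rw [List.prod_ofFn]

lemma constantCoeff_S (η : ℕ) :
    coeff 0 (∑ j ∈ Finset.range (η + 1), ((j.factorial : k))⁻¹ • (∑ i, C (e i) * X i) ^ j)
      = 1 := by
  rw [coeff_sum]
  have hL0 : constantCoeff (∑ i, C (e i) * X i) = (0 : A) := by
    rw [map_sum]
    refine Finset.sum_eq_zero fun i _ => ?_
    rw [map_mul, constantCoeff_X, mul_zero]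
  rw [Finset.sum_eq_single 0]
  · simp
  · intro j _ hj
    rw [coeff_smul]
    rw [show coeff 0 ((∑ i, C (e i) * X i) ^ j) = constantCoeff ((∑ i, C (e i) * X i) ^ j) from rfl]
    rw [map_pow, hL0, zero_pow hj, smul_zero]
  · intro h; exact absurd (Finset.mem_range.mpr (Nat.succ_pos η)) h

end Aux3

/-- Let `k` be a field of characteristic zero, `J ⊆ (x_1,…,x_n)` an ideal
with `A = k[x]/J` Artinian of socle degree `η`, and `ρ : A → k` a linear form whose kernel
is complementary to `Soc(A)` such that the bilinear form `(a,b) ↦ ρ(ab)` is non-degenerate.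
Then the polynomial `R = Σ_{j=0}^{η} (1/j!) ρ((x_1 e_1 + ⋯ + x_n e_n)^j)` is a Macaulay
inverse system for `A`: a polynomial `f` satisfies `f(∂)(R) = 0` iff `f ∈ J`. -/
theorem ann_of_inverse_system
    {k : Type*} [Field k] [CharZero k] (n : ℕ)
    (J : Ideal (MvPolynomial (Fin n) k))
    (hJ : J ≤ Ideal.span (Set.range X))
    (hArtinian : FiniteDimensional k (MvPolynomial (Fin n) k ⧸ J))
    (η : ℕ)
    (hη₁ : (Ideal.map (Ideal.Quotient.mk J) (Ideal.span (Set.range X))) ^ η ≠ ⊥)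
    (hη₂ : (Ideal.map (Ideal.Quotient.mk J) (Ideal.span (Set.range X))) ^ (η + 1) = ⊥)
    (ρ : (MvPolynomial (Fin n) k ⧸ J) →ₗ[k] k)
    (hker : IsCompl (LinearMap.ker ρ)
      (socle k (Ideal.map (Ideal.Quotient.mk J) (Ideal.span (Set.range X)))))
    (hnd : ∀ a : MvPolynomial (Fin n) k ⧸ J, (∀ b, ρ (a * b) = 0) → a = 0)
    (f : MvPolynomial (Fin n) k) :
    diffOp f (∑ j ∈ Finset.range (η + 1), ((j.factorial : k))⁻¹ •
        coeffMap (fun a => ρ a)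
          ((∑ i, MvPolynomial.C (Ideal.Quotient.mk J (X i)) * X i) ^ j))
      = 0 ↔ f ∈ J := by
  set A := MvPolynomial (Fin n) k ⧸ J
  set e : Fin n → A := fun i => Ideal.Quotient.mk J (X i) with he_def
  set M : Ideal A := Ideal.map (Ideal.Quotient.mk J) (Ideal.span (Set.range X)) with hM_def
  have he : ∀ i, e i ∈ M := fun i =>
    Ideal.mem_map_of_mem _ (Ideal.subset_span ⟨i, rfl⟩)
  set L : MvPolynomial (Fin n) A := ∑ i, C (e i) * X i with hL_def
  set S : MvPolynomial (Fin n) A :=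
    ∑ j ∈ Finset.range (η + 1), ((j.factorial : k))⁻¹ • L ^ j with hS_def
  have hS : ∀ i, pderiv i S = C (e i) * S := fun i => pderiv_S e M η he hη₂ i
  -- the inverse-system polynomial is `coeffMap ρ S`
  have hR : (∑ j ∈ Finset.range (η + 1), ((j.factorial : k))⁻¹ •
        coeffMap (fun a => ρ a) (L ^ j)) = coeffMap (fun a => ρ a) S := by
    rw [hS_def, coeffMap_sum]
    exact Finset.sum_congr rfl fun j _ => (coeffMap_smul ρ _ _).symm
  rw [hR]
  -- the product of the `e i ^ d i` is the class of the monomial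
  have hprod : ∀ d : Fin n →₀ ℕ,
      (∏ i, e i ^ d i) = Ideal.Quotient.mk J (monomial d 1) := by
    intro d
    have h1 : (∏ i, e i ^ d i) = Ideal.Quotient.mk J (∏ i, X i ^ d i) := by
      rw [map_prod]
      exact Finset.prod_congr rfl fun i _ => by rw [map_pow]
    rw [h1]
    congr 1
    rw [← prod_X_pow_eq_monomial]
    exact (Finset.prod_subset (Finset.subset_univ _) fun i _ hi => by
      rw [Finsupp.notMem_support_iff.mp hi, pow_zero]).symm
  -- key identity : diffOp f (coeffMap ρ S) = coeffMap ρ (C (mk f) * S)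
  have hCf : (∑ d ∈ f.support, f.coeff d • (C (∏ i, e i ^ d i) : MvPolynomial (Fin n) A))
      = C (Ideal.Quotient.mk J f) := by
    have hsmulC : ∀ (c : k) (a : A), c • (C a : MvPolynomial (Fin n) A) = C (c • a) := by
      intro c a
      calc c • (C a : MvPolynomial (Fin n) A)
          = algebraMap k (MvPolynomial (Fin n) A) c * C a := Algebra.smul_def c (C a)
        _ = C (algebraMap k A c) * C a := rfl
        _ = C (algebraMap k A c * a) := by rw [C_mul]
        _ = C (c • a) := by congr 1; exact (Algebra.smul_def c a).symm
    calc
      (∑ d ∈ f.support, f.coeff d • (C (∏ i, e i ^ d i) : MvPolynomial (Fin n) A))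
          = ∑ d ∈ f.support, C (f.coeff d • Ideal.Quotient.mk J (monomial d 1)) := by
            exact Finset.sum_congr rfl fun d _ => by rw [hprod, hsmulC]
      _ = C (∑ d ∈ f.support, f.coeff d • Ideal.Quotient.mk J (monomial d 1)) := by
            rw [map_sum]
      _ = C (Ideal.Quotient.mk J f) := by
            congr 1
            have : ∀ d ∈ f.support, f.coeff d • Ideal.Quotient.mk J (monomial d 1)
                = Ideal.Quotient.mk J (monomial d (f.coeff d)) := by
              intro d _
              rw [← Ideal.Quotient.mkₐ_eq_mk (R₁ := k), ← map_smul, smul_monomial,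
                smul_eq_mul, mul_one]
            rw [Finset.sum_congr rfl this, ← map_sum, support_sum_monomial_coeff]
  have hmain : diffOp f (coeffMap (fun a => ρ a) S)
      = coeffMap (fun a => ρ a) (C (Ideal.Quotient.mk J f) * S) := by
    unfold diffOp
    calc
      ∑ d ∈ f.support, f.coeff d • diffMonomial d (coeffMap (fun a => ρ a) S)
          = ∑ d ∈ f.support, coeffMap (fun a => ρ a)
              (f.coeff d • (C (∏ i, e i ^ d i) * S)) := by
            refine Finset.sum_congr rfl fun d _ => ?_
            rw [coeffMap_diffMonomial, diffMonomial_S e S hS, coeffMap_smul]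
      _ = coeffMap (fun a => ρ a) (∑ d ∈ f.support, f.coeff d • (C (∏ i, e i ^ d i) * S)) := by
            rw [coeffMap_sum]
      _ = coeffMap (fun a => ρ a) (C (Ideal.Quotient.mk J f) * S) := by
            congr 1
            rw [← hCf, Finset.sum_mul]
            exact Finset.sum_congr rfl fun d _ => by rw [smul_mul_assoc]
  rw [hmain]
  constructor
  · intro h
    have hcoeffs : ∀ m : Fin n →₀ ℕ, ρ (Ideal.Quotient.mk J f * coeff m S) = 0 := by
      intro m
      have := congrArg (coeff m) h
      rwa [coeff_coeffMap, coeff_C_mul, coeff_zero] at this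
    set V : Submodule k A := Submodule.span k (Set.range fun m : Fin n →₀ ℕ => coeff m S) with hV
    have h1 : (1 : A) ∈ V := by
      have : coeff 0 S = 1 := constantCoeff_S e η
      rw [← this]
      exact Submodule.subset_span ⟨0, rfl⟩
    have hrel : ∀ (i : Fin n) (m : Fin n →₀ ℕ),
        e i * coeff m S = (m i + 1) • coeff (m + Finsupp.single i 1) S := by
      intro i m
      have := congrArg (coeff m) (hS i)
      rw [_root_.coeff_pderiv, coeff_C_mul] at this
      exact this.symm
    have h2 : ∀ (i : Fin n), ∀ a ∈ V, e i * a ∈ V := by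
      intro i a ha
      induction ha using Submodule.span_induction with
      | mem x hx =>
        obtain ⟨m, rfl⟩ := hx
        rw [hrel]
        exact nsmul_mem (Submodule.subset_span (Set.mem_range_self _)) _
      | zero => rw [mul_zero]; exact V.zero_mem
      | add x y _ _ hx hy => rw [mul_add]; exact V.add_mem hx hy
      | smul c x _ hx => rw [mul_smul_comm]; exact V.smul_mem c hx
    have h3 : ∀ g : MvPolynomial (Fin n) k, ∀ a ∈ V, Ideal.Quotient.mk J g * a ∈ V := by
      intro g
      induction g using MvPolynomial.induction_on with
      | C c =>
        intro a ha
        have : Ideal.Quotient.mk J (C c) * a = c • a := by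
          rw [show (Ideal.Quotient.mk J) (C c)
              = algebraMap k A c from rfl, ← Algebra.smul_def]
        rw [this]
        exact V.smul_mem c ha
      | add p q hp hq =>
        intro a ha
        rw [map_add, add_mul]
        exact V.add_mem (hp a ha) (hq a ha)
      | mul_X p i hp =>
        intro a ha
        have : Ideal.Quotient.mk J (p * X i) * a = e i * (Ideal.Quotient.mk J p * a) := by
          rw [map_mul]; ring
        rw [this]
        exact h2 i _ (hp a ha)
    have key : ∀ a ∈ V, ρ (Ideal.Quotient.mk J f * a) = 0 := by
      intro a ha
      induction ha using Submodule.span_induction with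
      | mem x hx =>
        obtain ⟨m, rfl⟩ := hx
        exact hcoeffs m
      | zero => rw [mul_zero, map_zero]
      | add x y _ _ hx hy => rw [mul_add, map_add, hx, hy, add_zero]
      | smul c x _ hx => rw [mul_smul_comm, map_smul, hx, smul_zero]
    have hf0 : Ideal.Quotient.mk J f = 0 := by
      apply hnd
      intro b
      obtain ⟨g, rfl⟩ := Ideal.Quotient.mk_surjective b
      have : Ideal.Quotient.mk J g ∈ V := by
        have := h3 g 1 h1
        rwa [mul_one] at this
      exact key _ this
    exact Ideal.Quotient.eq_zero_iff_mem.mp hf0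
  · intro hf
    rw [Ideal.Quotient.eq_zero_iff_mem.mpr hf, C_0, zero_mul, coeffMap_zero]
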